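/- Let σ be a p-uniform morphism on A_m. Then for every n ≥ 1, the matrix of the iterated morphism satisfies M_{σ^n}(T) = M_σ(T^{p^{n−1}}) · M_σ(T^{p^{n−2}}) ⋯ M_σ(T). -/

import Mathlib

open Polynomial
open scoped Classical

/-- The extension of a substitution `σ` on the alphabet `{0,…,m-1}` to finite words. -/
def applyMorph {m : ℕ} (σ : Fin m → List (Fin m)) (w : List (Fin m)) : List (Fin m) :=
  w.flatMap σ

/-- The `n`-th iterate `σⁿ` of a substitution, as a map on letters. -/
def iterMorph {m : ℕ} (σ : Fin m → List (Fin m)) : ℕ → Fin m → List (Fin m)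
  | 0 => fun i => [i]
  | n + 1 => fun i => applyMorph σ (iterMorph σ n i)

/-- `β_{W,j}(T) = Σ_l T^l`, summed over the positions `l` of the letter `j` in the
reversal of the word `W` (entries in `F_p[T]`). -/
noncomputable def beta (p m : ℕ) (W : List (Fin m)) (j : Fin m) : Polynomial (ZMod p) :=
  ∑ l ∈ Finset.range W.length,
    if W.reverse.getD l j = j then Polynomial.X ^ l else 0

/-- The matrix `M_σ(T) = (β_{σ(i),j}(T))_{i,j}` associated with a substitution `σ`. -/
noncomputable def Mmat (p m : ℕ) (σ : Fin m → List (Fin m)) :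
    Matrix (Fin m) (Fin m) (Polynomial (ZMod p)) :=
  fun i j => beta p m (σ i) j

/-- Substitution `T ↦ T^r` applied entrywise to a polynomial matrix. -/
noncomputable def substMat {p m : ℕ} (r : ℕ)
    (M : Matrix (Fin m) (Fin m) (Polynomial (ZMod p))) :
    Matrix (Fin m) (Fin m) (Polynomial (ZMod p)) :=
  M.map fun f => f.comp (Polynomial.X ^ r)

lemma beta_nil (p m : ℕ) (j : Fin m) : beta p m [] j = 0 := by
  simp [beta]

lemma beta_append (p m : ℕ) (U V : List (Fin m)) (j : Fin m) :
    beta p m (U ++ V) j = beta p m V j + X ^ V.length * beta p m U j := by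
  unfold beta
  rw [Finset.mul_sum]
  have hlen : (U ++ V).length = V.length + U.length := by
    simp [Nat.add_comm]
  rw [hlen, Finset.sum_range_add]
  congr 1
  · apply Finset.sum_congr rfl
    intro l hl
    simp only [Finset.mem_range] at hl
    rw [List.reverse_append, List.getD_append _ _ _ _ (by simpa using hl)]
  · apply Finset.sum_congr rfl
    intro l hl
    simp only [Finset.mem_range] at hl
    rw [List.reverse_append,
      List.getD_append_right _ _ _ _ (by simp)]
    simp only [List.length_reverse, Nat.add_sub_cancel_left]
    split <;> simp [pow_add, mul_comm]

lemma beta_cons (p m : ℕ) (a : Fin m) (W : List (Fin m)) (j : Fin m) :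
    beta p m (a :: W) j = beta p m W j + if a = j then X ^ W.length else 0 := by
  have h := beta_append p m [a] W j
  have h1 : beta p m [a] j = if a = j then 1 else 0 := by
    simp [beta]
  rw [show (a :: W) = [a] ++ W from rfl, h, h1]
  split <;> simp

lemma length_applyMorph {p m : ℕ} (σ : Fin m → List (Fin m)) (hσ : ∀ i, (σ i).length = p)
    (W : List (Fin m)) : (applyMorph σ W).length = p * W.length := by
  unfold applyMorph
  rw [List.length_flatMap]
  induction W with
  | nil => simp
  | cons a W ih =>
    simp [ih, hσ, Nat.mul_add, Nat.mul_one, Nat.add_comm]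
    exact Nat.mul_comm _ _

lemma beta_flatMap (p m : ℕ) (σ : Fin m → List (Fin m)) (hσ : ∀ i, (σ i).length = p)
    (W : List (Fin m)) (j : Fin m) :
    beta p m (applyMorph σ W) j
      = ∑ k : Fin m, (beta p m W k).comp (X ^ p) * beta p m (σ k) j := by
  induction W with
  | nil => simp [applyMorph, beta_nil, Polynomial.zero_comp]
  | cons a W ih =>
    have hcons : applyMorph σ (a :: W) = σ a ++ applyMorph σ W := by
      simp [applyMorph]
    rw [hcons, beta_append, length_applyMorph σ hσ, ih]
    have : ∀ k : Fin m,
        (beta p m (a :: W) k).comp (X ^ p) * beta p m (σ k) j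
          = (beta p m W k).comp (X ^ p) * beta p m (σ k) j
            + (if a = k then X ^ (p * W.length) * beta p m (σ k) j else 0) := by
      intro k
      rw [beta_cons, Polynomial.add_comp, add_mul]
      congr 1
      split
      · rw [Polynomial.pow_comp, Polynomial.X_comp, ← pow_mul]
      · simp
    rw [Finset.sum_congr rfl (fun k _ => this k), Finset.sum_add_distrib,
      Finset.sum_ite_eq _ a (fun k => X ^ (p * W.length) * beta p m (σ k) j)]
    simp

noncomputable def substHom (p m r : ℕ) :
    Matrix (Fin m) (Fin m) (Polynomial (ZMod p)) →+*
      Matrix (Fin m) (Fin m) (Polynomial (ZMod p)) :=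
  (Polynomial.compRingHom (X ^ r)).mapMatrix

lemma substMat_eq_hom {p m : ℕ} (r : ℕ) (M : Matrix (Fin m) (Fin m) (Polynomial (ZMod p))) :
    substMat r M = substHom p m r M := rfl

lemma substMat_substMat {p m : ℕ} (a b : ℕ) (M : Matrix (Fin m) (Fin m) (Polynomial (ZMod p))) :
    substMat b (substMat a M) = substMat (a * b) M := by
  refine Matrix.ext fun i j => ?_
  simp only [substMat, Matrix.map_apply]
  rw [Polynomial.comp_assoc, Polynomial.X_pow_comp, ← pow_mul, mul_comm b a]

lemma substMat_one {p m : ℕ} (M : Matrix (Fin m) (Fin m) (Polynomial (ZMod p))) :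
    substMat 1 M = M := by
  refine Matrix.ext fun i j => ?_
  simp [substMat]

lemma Mmat_succ (p m : ℕ) (σ : Fin m → List (Fin m)) (hσ : ∀ i, (σ i).length = p) (n : ℕ) :
    Mmat p m (iterMorph σ (n + 1))
      = substMat p (Mmat p m (iterMorph σ n)) * Mmat p m σ := by
  refine Matrix.ext fun i j => ?_
  rw [Matrix.mul_apply]
  show beta p m (applyMorph σ (iterMorph σ n i)) j = _
  rw [beta_flatMap p m σ hσ]
  rfl

/-- `M_{σⁿ}(T) = M_σ(T^{p^{n-1}}) · M_σ(T^{p^{n-2}}) ⋯ M_σ(T)` for every `n ≥ 1`. -/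
theorem Mmat_iter (p m : ℕ) [Fact p.Prime]
    (σ : Fin m → List (Fin m)) (hσ : ∀ i, (σ i).length = p)
    (n : ℕ) (hn : 1 ≤ n) :
    Mmat p m (iterMorph σ n) =
      ((List.range n).map fun i => substMat (p ^ (n - 1 - i)) (Mmat p m σ)).prod := by
  induction n, hn using Nat.le_induction with
  | base =>
    have h1 : Mmat p m (iterMorph σ 1) = Mmat p m σ := by
      refine Matrix.ext fun i j => ?_
      show beta p m (applyMorph σ [i]) j = beta p m (σ i) j
      simp [applyMorph]
    simp [h1, substMat_one]
  | succ n hn ih =>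
    rw [Mmat_succ p m σ hσ, ih, substMat_eq_hom, map_list_prod, List.map_map]
    rw [List.range_succ, List.map_append, List.prod_append]
    have hmap : (List.range n).map
          ((substHom p m p) ∘ fun i => substMat (p ^ (n - 1 - i)) (Mmat p m σ))
        = (List.range n).map fun i => substMat (p ^ (n + 1 - 1 - i)) (Mmat p m σ) := by
      apply List.map_congr_left
      intro i hi
      simp only [List.mem_range] at hi
      show substMat p (substMat (p ^ (n - 1 - i)) (Mmat p m σ)) = _
      rw [substMat_substMat, ← pow_succ]
      have h2 : n - 1 - i + 1 = n + 1 - 1 - i := by omega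
      rw [h2]
    rw [hmap]
    simp [substMat_one]
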